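/- arXiv:math/0506529 — 4 statements merged into one kernel-verified Lean document; each statement's English description precedes it below -/
import Mathlib

section
/- Let D be a connected finite graph and H a nested set on D (a collection of pairwise compatible connected subgraphs of D containing D, where two subgraphs are compatible if one contains the other or they are orthogonal, i.e. no edge joins them). For B in H, let i_H(B) be the union of the maximal elements of H properly contained in B, and set n(B;H) = |V(B) \ V(i_H(B))|. Then the sum over B in H of (n(B;H) - 1) equals |V(D)| - |H|. -/
open scoped Classical

section NestedSets

variable {V : Type*} [Fintype V] [DecidableEq V]

/-- The (induced subgraph on the) finite vertex set `B` is connected (in particular nonempty). -/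
def Conn (G : SimpleGraph V) (B : Finset V) : Prop :=
  (G.induce (B : Set V)).Connected

/-- Two vertex sets are orthogonal: no edge of `G` joins a vertex of one to a vertex
of the other. -/
def Orth (G : SimpleGraph V) (B C : Finset V) : Prop :=
  ∀ a ∈ B, ∀ b ∈ C, ¬ G.Adj a b

/-- Two subdiagrams are compatible if one contains the other or they are orthogonal. -/
def Compat (G : SimpleGraph V) (B C : Finset V) : Prop :=
  B ⊆ C ∨ C ⊆ B ∨ Orth G B C

/-- A nested set on the (connected) diagram `D` with vertex set `V`: a collection of
pairwise compatible connected subdiagrams containing `D` itself. -/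
def Nested (G : SimpleGraph V) (H : Finset (Finset V)) : Prop :=
  Finset.univ ∈ H ∧ (∀ B ∈ H, Conn G B) ∧ ∀ B ∈ H, ∀ C ∈ H, Compat G B C

/-- `iN H B` is the union of the elements of `H` strictly contained in `B`;
this coincides with the union of the *maximal* elements of `H` strictly contained in `B`. -/
noncomputable def iN (H : Finset (Finset V)) (B : Finset V) : Finset V :=
  (H.filter fun C => C ⊂ B).sup id

/-- `nN H B = n(B;H)` is the number of vertices of `B` not covered by the maximal
elements of `H` strictly contained in `B`. -/
noncomputable def nN (H : Finset (Finset V)) (B : Finset V) : ℕ :=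
  (B \ iN H B).card

/-- `C` is a connected component of (the induced subgraph on) `S`. -/
def IsCC (G : SimpleGraph V) (S C : Finset V) : Prop :=
  C ⊆ S ∧ Conn G C ∧ ∀ C', C ⊆ C' → C' ⊆ S → Conn G C' → C' = C

/-- A maximal nested set on `D`. -/
def MaxNested (G : SimpleGraph V) (F : Finset (Finset V)) : Prop :=
  Nested G F ∧ ∀ K, Nested G K → F ⊆ K → K = F

end NestedSets


section Aux

variable {V : Type*} [Fintype V] [DecidableEq V]

lemma conn_exists_adj (G : SimpleGraph V) (S : Set V) (h : (G.induce S).Connected)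
    (a b : S) (hne : a ≠ b) : ∃ u : S, G.Adj a u := by
  obtain ⟨p⟩ := h.preconnected a b
  have hnn : ¬ p.Nil := SimpleGraph.Walk.not_nil_of_ne hne
  exact ⟨p.getVert 1, by have := p.adj_snd hnn; simpa [SimpleGraph.comap_adj] using this⟩

lemma orth_eq_singleton (G : SimpleGraph V) {B C : Finset V} (ho : Orth G B C)
    (hc : Conn G B) {v : V} (hvB : v ∈ B) (hvC : v ∈ C) : B = {v} := by
  apply Finset.eq_singleton_iff_unique_mem.mpr
  refine ⟨hvB, fun w hw => ?_⟩
  by_contra hne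
  obtain ⟨u, hu⟩ := conn_exists_adj G (B : Set V) hc ⟨v, by simpa using hvB⟩
    ⟨w, by simpa using hw⟩ (by simpa [Subtype.ext_iff] using fun h => hne h.symm)
  exact ho u (by simpa using u.2) v hvC hu.symm

end Aux

/-- For a nested set `H` on a connected diagram `D`,
`∑_{B ∈ H} (n(B;H) - 1) = |V(D)| - |H|`. -/
theorem stmt0 {V : Type*} [Fintype V] [DecidableEq V]
    (G : SimpleGraph V) (hG : G.Connected)
    (H : Finset (Finset V)) (hH : Nested G H) :
    ∑ B ∈ H, ((nN H B : ℤ) - 1) = (Fintype.card V : ℤ) - H.card := by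
  obtain ⟨huniv, hconn, hcompat⟩ := hH
  have hdisj : ∀ B ∈ H, ∀ C ∈ H, B ≠ C →
      Disjoint (B \ iN H B) (C \ iN H C) := by
    intro B hB C hC hne
    rw [Finset.disjoint_left]
    intro v hvB hvC
    simp only [Finset.mem_sdiff] at hvB hvC
    rcases hcompat B hB C hC with h | h | h
    · have hss : B ⊂ C := ⟨h, fun h2 => hne (Finset.Subset.antisymm h h2)⟩
      exact hvC.2 (Finset.mem_sup.mpr ⟨B, Finset.mem_filter.mpr ⟨hB, hss⟩, hvB.1⟩)
    · have hss : C ⊂ B := ⟨h, fun h2 => hne (Finset.Subset.antisymm h2 h)⟩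
      exact hvB.2 (Finset.mem_sup.mpr ⟨C, Finset.mem_filter.mpr ⟨hC, hss⟩, hvC.1⟩)
    · have h1 := orth_eq_singleton G h (hconn B hB) hvB.1 hvC.1
      have h2 := orth_eq_singleton G (fun a ha b hb hab => h b hb a ha hab.symm)
        (hconn C hC) hvC.1 hvB.1
      exact hne (h1.trans h2.symm)
  have hcover : ∀ v : V, ∃ B ∈ H, v ∈ B \ iN H B := by
    intro v
    have hne : (H.filter fun C => v ∈ C).Nonempty :=
      ⟨Finset.univ, Finset.mem_filter.mpr ⟨huniv, Finset.mem_univ v⟩⟩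
    obtain ⟨B, hBmem, hBmin⟩ := Finset.exists_min_image _ Finset.card hne
    rw [Finset.mem_filter] at hBmem
    refine ⟨B, hBmem.1, Finset.mem_sdiff.mpr ⟨hBmem.2, ?_⟩⟩
    intro hvi
    obtain ⟨C, hCf, hvC⟩ := Finset.mem_sup.mp hvi
    rw [Finset.mem_filter] at hCf
    have := hBmin C (Finset.mem_filter.mpr ⟨hCf.1, hvC⟩)
    exact absurd (Finset.card_lt_card hCf.2) (not_lt.mpr this)
  have hkey : ∑ B ∈ H, nN H B = Fintype.card V := by
    unfold nN
    rw [← Finset.card_biUnion (fun B hB C hC h => hdisj B hB C hC h), ← Finset.card_univ]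
    congr 1
    apply Finset.eq_univ_of_forall
    intro v
    rw [Finset.mem_biUnion]
    exact hcover v
  have h1 : ∑ B ∈ H, ((nN H B : ℤ) - 1) = (∑ B ∈ H, (nN H B : ℤ)) - H.card := by
    rw [Finset.sum_sub_distrib, Finset.sum_const, nsmul_eq_mul, mul_one]
  have h2 : (∑ B ∈ H, (nN H B : ℤ)) = (Fintype.card V : ℤ) := by
    rw [← Nat.cast_sum, hkey]
  rw [h1, h2]
end

section
/- Let D be a connected finite graph and H a nested set on D that is maximal with respect to inclusion among nested sets. Then for every B in H one has n(B;H) = 1, i.e. exactly one vertex of B does not lie in the union of the maximal elements of H properly contained in B. Consequently, every maximal nested set on D has cardinality |V(D)|. -/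
open scoped Classical

set_option linter.unusedSectionVars false
set_option linter.unnecessarySimpa false
set_option linter.unusedVariables false

section PfAux
variable {V : Type*} [Fintype V] [DecidableEq V] {G : SimpleGraph V}

def NRel (G : SimpleGraph V) (A : Finset V) (a b : V) : Prop :=
  a ∈ A ∧ b ∈ A ∧ G.Adj a b

lemma orth_symm {B C : Finset V} (h : Orth G B C) : Orth G C B :=
  fun a ha b hb hadj => h b hb a ha hadj.symm

lemma conn_nonempty {B : Finset V} (h : Conn G B) : B.Nonempty := by
  obtain ⟨⟨v, hv⟩⟩ := h.nonempty
  exact ⟨v, by simpa using hv⟩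

lemma induce_adj' {A : Finset V} {a b : V} (ha : a ∈ A) (hb : b ∈ A)
    (h : G.Adj a b) : (G.induce (A : Set V)).Adj ⟨a, by simpa using ha⟩ ⟨b, by simpa using hb⟩ := by
  simpa using h

lemma chain_of_walk {A : Finset V} {a b : (A : Set V)}
    (w : (G.induce (A : Set V)).Walk a b) : Relation.ReflTransGen (NRel G A) a b := by
  induction w with
  | nil => exact .refl
  | @cons u v w h p ih =>
      exact .head ⟨by simpa using u.2, by simpa using v.2, by simpa using h⟩ ih

lemma reach_of_conn {B : Finset V} (h : Conn G B) {x y : V} (hx : x ∈ B) (hy : y ∈ B) :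
    Relation.ReflTransGen (NRel G B) x y := by
  obtain ⟨w⟩ := h.preconnected ⟨x, by simpa using hx⟩ ⟨y, by simpa using hy⟩
  exact chain_of_walk w

lemma reach_of_chain {A : Finset V} {x y : V} (hx : x ∈ A)
    (h : Relation.ReflTransGen (NRel G A) x y) :
    ∃ hy : y ∈ A, (G.induce (A : Set V)).Reachable ⟨x, by simpa using hx⟩ ⟨y, by simpa using hy⟩ := by
  induction h with
  | refl => exact ⟨hx, .refl _⟩
  | tail _ hbc ih =>
      obtain ⟨hb, hr⟩ := ih
      exact ⟨hbc.2.1, hr.trans (SimpleGraph.Adj.reachable (induce_adj' hb hbc.2.1 hbc.2.2))⟩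

lemma conn_of_chains {A : Finset V} {x : V} (hx : x ∈ A)
    (h : ∀ y ∈ A, Relation.ReflTransGen (NRel G A) x y) : Conn G A := by
  rw [Conn, SimpleGraph.connected_iff]
  refine ⟨fun a b => ?_, ⟨⟨x, by simpa using hx⟩⟩⟩
  obtain ⟨ha, ra⟩ := reach_of_chain hx (h a (by simpa using a.2))
  obtain ⟨hb, rb⟩ := reach_of_chain hx (h b (by simpa using b.2))
  exact ra.symm.trans rb

lemma crossing {A S : Finset V} {x y : V} (hxS : x ∈ S)
    (h : Relation.ReflTransGen (NRel G A) x y) :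
    y ∉ S → ∃ a ∈ S, ∃ b ∈ A, b ∉ S ∧ G.Adj a b := by
  induction h with
  | refl => exact fun hy => absurd hxS hy
  | @tail b c _ hbc ih =>
      intro hy
      by_cases hb : b ∈ S
      · exact ⟨b, hb, c, hbc.2.1, hy, hbc.2.2⟩
      · exact ih hb

lemma exists_boundary {B S : Finset V} (hc : Conn G B) (hS : S ⊆ B)
    {s t : V} (hs : s ∈ S) (ht : t ∈ B) (hts : t ∉ S) :
    ∃ a ∈ S, ∃ b ∈ B, b ∉ S ∧ G.Adj a b :=
  crossing hs (reach_of_conn hc (hS hs) ht) hts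

lemma mem_iN {H : Finset (Finset V)} {B : Finset V} {v : V} :
    v ∈ iN H B ↔ ∃ C ∈ H, C ⊂ B ∧ v ∈ C := by
  simp only [iN, Finset.mem_sup, Finset.mem_filter, id]
  tauto

lemma subset_iN {H : Finset (Finset V)} {B C : Finset V} (hC : C ∈ H) (h : C ⊂ B) :
    C ⊆ iN H B :=
  fun v hv => mem_iN.mpr ⟨C, hC, h, hv⟩

lemma iN_subset {H : Finset (Finset V)} {B : Finset V} : iN H B ⊆ B := by
  intro v hv
  obtain ⟨C, _, hCB, hvC⟩ := mem_iN.mp hv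
  exact hCB.subset hvC

lemma diff_nonempty {H : Finset (Finset V)} (hN : Nested G H) {B : Finset V} (hB : B ∈ H) :
    (B \ iN H B).Nonempty := by
  by_contra hcon
  rw [Finset.not_nonempty_iff_eq_empty, Finset.sdiff_eq_empty_iff_subset] at hcon
  obtain ⟨x, hx⟩ := conn_nonempty (hN.2.1 B hB)
  obtain ⟨C0, hC0H, hC0B, hxC0⟩ := mem_iN.mp (hcon hx)
  classical
  obtain ⟨C, hCT, hCmax⟩ := Finset.exists_max_image
    (H.filter (fun C => C ⊂ B ∧ x ∈ C)) Finset.card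
    ⟨C0, Finset.mem_filter.mpr ⟨hC0H, hC0B, hxC0⟩⟩
  obtain ⟨hCH, hCB, hxC⟩ := Finset.mem_filter.mp hCT
  obtain ⟨t, htB, htC⟩ := Finset.exists_of_ssubset hCB
  obtain ⟨a, haC, b, hbB, hbC, hab⟩ := exists_boundary (hN.2.1 B hB) hCB.subset hxC htB htC
  obtain ⟨C', hC'H, hC'B, hbC'⟩ := mem_iN.mp (hcon hbB)
  rcases hN.2.2 C hCH C' hC'H with h1 | h2 | h3
  · have hmem : C' ∈ H.filter (fun C => C ⊂ B ∧ x ∈ C) :=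
      Finset.mem_filter.mpr ⟨hC'H, hC'B, h1 hxC⟩
    have hle := hCmax C' hmem
    have hlt : C.card < C'.card :=
      Finset.card_lt_card (ssubset_of_subset_of_ne h1 (fun e => hbC (e ▸ hbC')))
    omega
  · exact hbC (h2 hbC')
  · exact h3 a haC b hbC' hab

lemma exists_adj_of_mem {B : Finset V} (hc : Conn G B) {v w : V} (hv : v ∈ B) (hw : w ∈ B)
    (hne : w ≠ v) : ∃ b ∈ B, G.Adj v b := by
  obtain ⟨a, ha, b, hbB, hb, hab⟩ := exists_boundary (S := {v}) hc
    (Finset.singleton_subset_iff.mpr hv) (Finset.mem_singleton_self v) hw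
    (by simpa using hne)
  rw [Finset.mem_singleton] at ha
  exact ⟨b, hbB, ha ▸ hab⟩

lemma core_disjoint {H : Finset (Finset V)} (hN : Nested G H) {B B' : Finset V}
    (hB : B ∈ H) (hB' : B' ∈ H) (hne : B ≠ B') {v : V}
    (h1 : v ∈ B \ iN H B) (h2 : v ∈ B' \ iN H B') : False := by
  simp only [Finset.mem_sdiff] at h1 h2
  rcases hN.2.2 B hB B' hB' with h | h | h
  · exact h2.2 (mem_iN.mpr ⟨B, hB, ssubset_of_subset_of_ne h hne, h1.1⟩)
  · exact h1.2 (mem_iN.mpr ⟨B', hB', ssubset_of_subset_of_ne h hne.symm, h2.1⟩)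
  · by_cases hBv : ∃ w ∈ B, w ≠ v
    · obtain ⟨w, hw, hwv⟩ := hBv
      obtain ⟨b, hbB, hadj⟩ := exists_adj_of_mem (hN.2.1 B hB) h1.1 hw hwv
      exact h b hbB v h2.1 hadj.symm
    · by_cases hB'v : ∃ w ∈ B', w ≠ v
      · obtain ⟨w, hw, hwv⟩ := hB'v
        obtain ⟨b, hbB, hadj⟩ := exists_adj_of_mem (hN.2.1 B' hB') h2.1 hw hwv
        exact h v h1.1 b hbB hadj
      · push_neg at hBv hB'v
        apply hne
        rw [Finset.eq_singleton_iff_unique_mem.mpr ⟨h1.1, hBv⟩,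
          Finset.eq_singleton_iff_unique_mem.mpr ⟨h2.1, hB'v⟩]

lemma core_cover {H : Finset (Finset V)} (hN : Nested G H) (v : V) :
    ∃ B ∈ H, v ∈ B \ iN H B := by
  classical
  obtain ⟨B, hBT, hBmin⟩ := Finset.exists_min_image
    (H.filter (fun B => v ∈ B)) Finset.card
    ⟨Finset.univ, Finset.mem_filter.mpr ⟨hN.1, Finset.mem_univ v⟩⟩
  obtain ⟨hBH, hvB⟩ := Finset.mem_filter.mp hBT
  refine ⟨B, hBH, Finset.mem_sdiff.mpr ⟨hvB, fun hv => ?_⟩⟩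
  obtain ⟨C, hCH, hCB, hvC⟩ := mem_iN.mp hv
  have hle := hBmin C (Finset.mem_filter.mpr ⟨hCH, hvC⟩)
  have := Finset.card_lt_card hCB
  omega

lemma nN_eq_one {F : Finset (Finset V)} (hF : MaxNested G F) {B : Finset V} (hB : B ∈ F) :
    nN F B = 1 := by
  obtain ⟨x, hx⟩ := diff_nonempty hF.1 hB
  rw [nN, Finset.card_eq_one]
  refine ⟨x, Finset.eq_singleton_iff_unique_mem.mpr ⟨hx, fun y hy => ?_⟩⟩
  by_contra hxy
  obtain ⟨hxB, hxI⟩ := Finset.mem_sdiff.mp hx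
  obtain ⟨hyB, hyI⟩ := Finset.mem_sdiff.mp hy
  set A : Finset V := insert x (iN F B) with hA
  have hAB : A ⊆ B := Finset.insert_subset hxB iN_subset
  have hxA : x ∈ A := Finset.mem_insert_self _ _
  set B' : Finset V := A.filter (fun w => Relation.ReflTransGen (NRel G A) x w) with hB'def
  have hxB' : x ∈ B' := Finset.mem_filter.mpr ⟨hxA, .refl⟩
  have hB'A : B' ⊆ A := Finset.filter_subset _ _
  have hB'B : B' ⊆ B := hB'A.trans hAB
  have hyA : y ∉ A := by
    simp only [hA, Finset.mem_insert]
    push_neg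
    exact ⟨hxy, hyI⟩
  have hyB' : y ∉ B' := fun h => hyA (hB'A h)
  have hB'ne : B' ≠ B := fun h => hyB' (h ▸ hyB)
  have hclose : ∀ w ∈ B', ∀ z ∈ A, G.Adj w z → z ∈ B' := by
    intro w hw z hz hadj
    obtain ⟨hwA, hwc⟩ := Finset.mem_filter.mp hw
    exact Finset.mem_filter.mpr ⟨hz, hwc.tail ⟨hwA, hz, hadj⟩⟩
  have hchainB' : ∀ w ∈ B', Relation.ReflTransGen (NRel G B') x w := by
    intro w hw
    have hch := (Finset.mem_filter.mp hw).2
    clear hw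
    induction hch with
    | refl => exact .refl
    | @tail b c hxb hbc ih =>
        exact ih.tail ⟨Finset.mem_filter.mpr ⟨hbc.1, hxb⟩,
          Finset.mem_filter.mpr ⟨hbc.2.1, hxb.tail hbc⟩, hbc.2.2⟩
  have hconnB' : Conn G B' := conn_of_chains hxB' hchainB'
  have hB'F : B' ∉ F := fun h =>
    hxI (subset_iN h (ssubset_of_subset_of_ne hB'B hB'ne) hxB')
  have hcompat : ∀ E ∈ F, Compat G E B' ∧ Compat G B' E := by
    intro E hE
    rcases hF.1.2.2 E hE B hB with h | h | h
    · by_cases hEB : E = B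
      · exact ⟨Or.inr (Or.inl (hEB ▸ hB'B)), Or.inl (hEB ▸ hB'B)⟩
      · have hEA : E ⊆ A :=
          (subset_iN hE (ssubset_of_subset_of_ne h hEB)).trans (Finset.subset_insert _ _)
        by_cases horth : Orth G E B'
        · exact ⟨Or.inr (Or.inr horth), Or.inr (Or.inr (orth_symm horth))⟩
        · rw [Orth] at horth
          push_neg at horth
          obtain ⟨a, haE, b, hbB', hadj⟩ := horth
          have haB' : a ∈ B' := hclose b hbB' a (hEA haE) hadj.symm
          have hEB' : E ⊆ B' := by
            intro f hf
            have hchA : Relation.ReflTransGen (NRel G A) a f :=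
              Relation.ReflTransGen.mono (r := NRel G E) (p := NRel G A)
                (fun p q hpq => ⟨hEA hpq.1, hEA hpq.2.1, hpq.2.2⟩) a f (reach_of_conn (hF.1.2.1 E hE) haE hf)
            exact Finset.mem_filter.mpr ⟨hEA hf, ((Finset.mem_filter.mp haB').2).trans hchA⟩
          exact ⟨Or.inl hEB', Or.inr (Or.inl hEB')⟩
    · exact ⟨Or.inr (Or.inl (hB'B.trans h)), Or.inl (hB'B.trans h)⟩
    · have horth : Orth G E B' := fun a ha b hb => h a ha b (hB'B hb)
      exact ⟨Or.inr (Or.inr horth), Or.inr (Or.inr (orth_symm horth))⟩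
  have hnest : Nested G (insert B' F) := by
    refine ⟨Finset.mem_insert_of_mem hF.1.1, ?_, ?_⟩
    · intro C hC
      rcases Finset.mem_insert.mp hC with h | h
      · exact h ▸ hconnB'
      · exact hF.1.2.1 C h
    · intro C hC D hD
      rcases Finset.mem_insert.mp hC with h | h <;> rcases Finset.mem_insert.mp hD with h' | h'
      · exact h ▸ h' ▸ Or.inl subset_rfl
      · exact h ▸ (hcompat D h').2
      · exact h' ▸ (hcompat C h).1
      · exact hF.1.2.2 C h D h'
  have heq := hF.2 _ hnest (Finset.subset_insert _ _)
  exact hB'F (heq ▸ Finset.mem_insert_self B' F)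

end PfAux


/-- For a maximal nested set `F` on a connected diagram `D`,
`n(B;F) = 1` for every `B ∈ F`, and consequently `|F| = |V(D)|`. -/
theorem stmt1 {V : Type*} [Fintype V] [DecidableEq V]
    (G : SimpleGraph V) (hG : G.Connected)
    (F : Finset (Finset V)) (hF : MaxNested G F) :
    (∀ B ∈ F, nN F B = 1) ∧ F.card = Fintype.card V := by
  have h1 : ∀ B ∈ F, nN F B = 1 := fun B hB => nN_eq_one hF hB
  refine ⟨h1, ?_⟩
  have hcover : Finset.univ = F.biUnion (fun B => B \ iN F B) := by
    apply Finset.ext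
    intro v
    simp only [Finset.mem_univ, true_iff, Finset.mem_biUnion]
    exact core_cover hF.1 v
  have hcard : (F.biUnion (fun B => B \ iN F B)).card = ∑ B ∈ F, (B \ iN F B).card :=
    Finset.card_biUnion (fun B hB C hC hne =>
      Finset.disjoint_left.mpr (fun {v} hv hv' => core_disjoint hF.1 hB hC hne hv hv'))
  have : Fintype.card V = ∑ B ∈ F, (B \ iN F B).card := by
    rw [← Finset.card_univ, hcover, hcard]
  have h1' : ∀ B ∈ F, (B \ iN F B).card = 1 := fun B hB => h1 B hB
  rw [this, Finset.sum_congr rfl h1', Finset.sum_const, smul_eq_mul, mul_one]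
end

section
/- Let V be a finite-dimensional complex vector space, X a finite set of nonzero linear forms on V, and let A be the holonomy algebra: the completion of the quotient of the free associative algebra on generators t_x (x ∈ X) by the relations [t_x, Σ_{y ∈ X∩U} t_y] = 0 for every two-dimensional subspace U of V* spanned by elements of X and every x ∈ X ∩ U. For a subspace B of V* set t_B = Σ_{x ∈ X∩B} t_x. Then for any two irreducible subspaces B, C in the lattice generated by X which form a nested pair (i.e. either B ⊆ C, or C ⊆ B, or B and C are in direct sum and are the irreducible summands of B ⊕ C), one has [t_B, t_C] = 0. -/
open scoped Classical

section Holonomy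

variable {V : Type*} [AddCommGroup V] [Module ℂ V]

/-- A subspace of `V*` lies in the lattice `L` generated by the finite set of linear
forms `X` if it is spanned by a subset of `X`. -/
def InLat (X : Finset (Module.Dual ℂ V)) (U : Submodule ℂ (Module.Dual ℂ V)) : Prop :=
  ∃ S : Finset (Module.Dual ℂ V), S ⊆ X ∧ U = Submodule.span ℂ (S : Set (Module.Dual ℂ V))

/-- A decomposition of `U ∈ L \ {0}`: a family `U₁, …, U_k` of nonzero elements of the
lattice such that every nonzero `W ∈ L` with `W ⊆ U` satisfies `W ∩ U_i ∈ L` for all `i`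
and `W = (W ∩ U₁) ⊕ ⋯ ⊕ (W ∩ U_k)`. -/
def IsDecomp (X : Finset (Module.Dual ℂ V)) (U : Submodule ℂ (Module.Dual ℂ V))
    {k : ℕ} (Us : Fin k → Submodule ℂ (Module.Dual ℂ V)) : Prop :=
  (∀ i, InLat X (Us i) ∧ Us i ≠ ⊥) ∧ U = ⨆ i, Us i ∧
    ∀ W : Submodule ℂ (Module.Dual ℂ V), InLat X W → W ≠ ⊥ → W ≤ U →
      (∀ i, InLat X (W ⊓ Us i)) ∧ W = ⨆ i, (W ⊓ Us i) ∧
        iSupIndep fun i => W ⊓ Us i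

/-- An element of the lattice is irreducible if it is nonzero and admits no decomposition
with at least two summands. -/
def Irred (X : Finset (Module.Dual ℂ V)) (U : Submodule ℂ (Module.Dual ℂ V)) : Prop :=
  InLat X U ∧ U ≠ ⊥ ∧
    ∀ k : ℕ, 2 ≤ k → ∀ Us : Fin k → Submodule ℂ (Module.Dual ℂ V), ¬ IsDecomp X U Us

end Holonomy

section AuxHol

variable {V : Type*} [AddCommGroup V] [Module ℂ V]

/-- The span of two forms, the second not a multiple of the first, has rank 2. -/
lemma finrank_span_pair' {x z : Module.Dual ℂ V} (hx : x ≠ 0)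
    (hz : z ∉ Submodule.span ℂ {x}) :
    Module.finrank ℂ (Submodule.span ℂ ({x, z} : Set (Module.Dual ℂ V))) = 2 := by
  have hy : ∀ a : ℂ, a • x ≠ z := by
    intro a ha
    exact hz (ha ▸ Submodule.smul_mem _ a (Submodule.mem_span_singleton_self x))
  have hindep := linearIndepOn_id_pair hx hy
  rw [finrank_span_set_eq_card hindep]
  have hxz : x ≠ z := fun h => hz (h ▸ Submodule.mem_span_singleton_self x)
  simp [Set.toFinset_insert, hxz]

/-- A plane spanned by two elements of `X` is spanned by the elements of `X` it contains. -/
lemma span_pair_spanning (X : Finset (Module.Dual ℂ V)) {x z : Module.Dual ℂ V}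
    (hx : x ∈ X) (hz : z ∈ X) :
    Submodule.span ℂ ({x, z} : Set (Module.Dual ℂ V)) =
      Submodule.span ℂ {w : Module.Dual ℂ V |
        w ∈ X ∧ w ∈ Submodule.span ℂ ({x, z} : Set (Module.Dual ℂ V))} := by
  apply le_antisymm
  · apply Submodule.span_mono
    rintro w (rfl | rfl)
    · exact ⟨hx, Submodule.subset_span (Set.mem_insert _ _)⟩
    · exact ⟨hz, Submodule.subset_span (Set.mem_insert_of_mem _ rfl)⟩
  · exact Submodule.span_le.2 (fun w hw => hw.2)

lemma span_singleton_eq_of_mem {x z : Module.Dual ℂ V} (hz0 : z ≠ 0)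
    (hzx : z ∈ Submodule.span ℂ ({x} : Set (Module.Dual ℂ V))) :
    Submodule.span ℂ ({z} : Set (Module.Dual ℂ V)) =
      Submodule.span ℂ ({x} : Set (Module.Dual ℂ V)) := by
  obtain ⟨a, rfl⟩ := Submodule.mem_span_singleton.1 hzx
  have ha : a ≠ 0 := by rintro rfl; simp at hz0
  apply le_antisymm
  · exact Submodule.span_le.2 (Set.singleton_subset_iff.2 hzx)
  · apply Submodule.span_le.2 (Set.singleton_subset_iff.2 ?_)
    refine Submodule.mem_span_singleton.2 ⟨a⁻¹, ?_⟩
    rw [smul_smul, inv_mul_cancel₀ ha, one_smul]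

variable {A : Type*} [Ring A] [FiniteDimensional ℂ V]

/-- Key lemma: the sum of `t` over the elements of `X` lying on a line `⟨x⟩` commutes with
the sum of `t` over the elements of `X` lying in any subspace `U` containing `x`. -/
lemma lineCommute (X : Finset (Module.Dual ℂ V)) (hX0 : (0 : Module.Dual ℂ V) ∉ X)
    (t : Module.Dual ℂ V → A)
    (hrel : ∀ U : Submodule ℂ (Module.Dual ℂ V), Module.finrank ℂ U = 2 →
      U = Submodule.span ℂ {x : Module.Dual ℂ V | x ∈ X ∧ x ∈ U} →
      ∀ x ∈ X, x ∈ U →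
        Commute (t x) (∑ y ∈ X.filter (fun y => y ∈ U), t y))
    {x : Module.Dual ℂ V} (hxX : x ∈ X)
    (U : Submodule ℂ (Module.Dual ℂ V)) (hxU : x ∈ U) :
    Commute (∑ y ∈ X.filter (fun y => y ∈ Submodule.span ℂ ({x} : Set (Module.Dual ℂ V))), t y)
      (∑ y ∈ X.filter (fun y => y ∈ U), t y) := by
  set L := Submodule.span ℂ ({x} : Set (Module.Dual ℂ V)) with hLdef
  set FL := X.filter (fun y => y ∈ L) with hFLdef
  set F := X.filter (fun y => y ∈ U) with hFdef
  set S := ∑ y ∈ FL, t y with hSdef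
  have hx0 : x ≠ 0 := fun h => hX0 (h ▸ hxX)
  have hLU : L ≤ U := Submodule.span_le.2 (Set.singleton_subset_iff.2 hxU)
  have hFLF : FL ⊆ F := by
    intro y hy
    rw [hFLdef, Finset.mem_filter] at hy
    rw [hFdef, Finset.mem_filter]
    exact ⟨hy.1, hLU hy.2⟩
  have hsplit : ∑ y ∈ F, t y = (∑ y ∈ F \ FL, t y) + S := (Finset.sum_sdiff hFLF).symm
  rw [show (∑ y ∈ F, t y) = (∑ y ∈ F \ FL, t y) + S from hsplit]
  refine Commute.add_right ?_ (Commute.refl S)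
  -- fibre the remaining sum by the plane through x
  rw [← Finset.sum_fiberwise_of_maps_to
    (g := fun z => Submodule.span ℂ ({x, z} : Set (Module.Dual ℂ V)))
    (fun z hz => Finset.mem_image_of_mem
      (fun z => Submodule.span ℂ ({x, z} : Set (Module.Dual ℂ V))) hz) t]
  refine Commute.sum_right _ _ _ ?_
  intro P hP
  obtain ⟨z₀, hz₀, rfl⟩ := Finset.mem_image.1 hP
  have hz₀' := hz₀
  rw [Finset.mem_sdiff, hFdef, Finset.mem_filter, hFLdef, Finset.mem_filter] at hz₀'
  obtain ⟨⟨hz₀X, hz₀U⟩, hz₀FL⟩ := hz₀'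
  have hz₀L : z₀ ∉ L := fun h => hz₀FL ⟨hz₀X, h⟩
  set P := Submodule.span ℂ ({x, z₀} : Set (Module.Dual ℂ V)) with hPdef
  have hrank : Module.finrank ℂ P = 2 := finrank_span_pair' hx0 hz₀L
  have hspan := span_pair_spanning X hxX hz₀X
  have hLP : L ≤ P := Submodule.span_le.2
    (Set.singleton_subset_iff.2 (Submodule.subset_span (Set.mem_insert _ _)))
  have hPU : P ≤ U := Submodule.span_le.2 (by
    rintro w (rfl | rfl)
    · exact hxU
    · exact hz₀U)
  have hCommP : Commute S (∑ y ∈ X.filter (fun y => y ∈ P), t y) := by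
    refine Commute.sum_left _ _ _ ?_
    intro w hw
    rw [hFLdef, Finset.mem_filter] at hw
    exact hrel P hrank hspan w hw.1 (hLP hw.2)
  have hfib : (F \ FL).filter
      (fun z => Submodule.span ℂ ({x, z} : Set (Module.Dual ℂ V)) = P) =
      (X.filter (fun y => y ∈ P)) \ FL := by
    ext z
    simp only [Finset.mem_filter, Finset.mem_sdiff, hFdef, hFLdef]
    constructor
    · rintro ⟨⟨⟨hzX, _⟩, hzFL⟩, hzP⟩
      exact ⟨⟨hzX, hzP ▸ Submodule.subset_span (Set.mem_insert_of_mem _ rfl)⟩, hzFL⟩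
    · rintro ⟨⟨hzX, hzP⟩, hzFL⟩
      have hzL : z ∉ L := fun h => hzFL ⟨hzX, h⟩
      have hle : Submodule.span ℂ ({x, z} : Set (Module.Dual ℂ V)) ≤ P := by
        apply Submodule.span_le.2
        rintro w (rfl | rfl)
        · exact Submodule.subset_span (Set.mem_insert _ _)
        · exact hzP
      have heq : Submodule.span ℂ ({x, z} : Set (Module.Dual ℂ V)) = P :=
        Submodule.eq_of_le_of_finrank_eq hle (by rw [finrank_span_pair' hx0 hzL, hrank])
      exact ⟨⟨⟨hzX, hPU hzP⟩, fun h => hzFL h⟩, heq⟩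
  rw [hfib]
  have hFLP : FL ⊆ X.filter (fun y => y ∈ P) := by
    intro y hy
    rw [hFLdef, Finset.mem_filter] at hy
    exact Finset.mem_filter.2 ⟨hy.1, hLP hy.2⟩
  rw [Finset.sum_sdiff_eq_sub hFLP]
  exact hCommP.sub_right (Commute.refl S)

/-- If `B ≤ C` then `t_B` commutes with `t_C` (no irreducibility needed). -/
lemma subCommute (X : Finset (Module.Dual ℂ V)) (hX0 : (0 : Module.Dual ℂ V) ∉ X)
    (t : Module.Dual ℂ V → A)
    (hrel : ∀ U : Submodule ℂ (Module.Dual ℂ V), Module.finrank ℂ U = 2 →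
      U = Submodule.span ℂ {x : Module.Dual ℂ V | x ∈ X ∧ x ∈ U} →
      ∀ x ∈ X, x ∈ U →
        Commute (t x) (∑ y ∈ X.filter (fun y => y ∈ U), t y))
    (B C : Submodule ℂ (Module.Dual ℂ V)) (hBC : B ≤ C) :
    Commute (∑ x ∈ X.filter (fun x => x ∈ B), t x)
      (∑ x ∈ X.filter (fun x => x ∈ C), t x) := by
  rw [← Finset.sum_fiberwise_of_maps_to
    (g := fun z => Submodule.span ℂ ({z} : Set (Module.Dual ℂ V)))
    (fun z hz => Finset.mem_image_of_mem
      (fun z => Submodule.span ℂ ({z} : Set (Module.Dual ℂ V))) hz) t]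
  refine Commute.sum_left _ _ _ ?_
  intro L hL
  obtain ⟨x₀, hx₀, rfl⟩ := Finset.mem_image.1 hL
  rw [Finset.mem_filter] at hx₀
  obtain ⟨hx₀X, hx₀B⟩ := hx₀
  have hx₀0 : x₀ ≠ 0 := fun h => hX0 (h ▸ hx₀X)
  have hfib : (X.filter (fun x => x ∈ B)).filter
      (fun z => Submodule.span ℂ ({z} : Set (Module.Dual ℂ V)) =
        Submodule.span ℂ ({x₀} : Set (Module.Dual ℂ V))) =
      X.filter (fun y => y ∈ Submodule.span ℂ ({x₀} : Set (Module.Dual ℂ V))) := by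
    ext z
    simp only [Finset.mem_filter]
    constructor
    · rintro ⟨⟨hzX, _⟩, hzL⟩
      exact ⟨hzX, hzL ▸ Submodule.mem_span_singleton_self z⟩
    · rintro ⟨hzX, hzL⟩
      have hz0 : z ≠ 0 := fun h => hX0 (h ▸ hzX)
      have hzB : z ∈ B := Submodule.span_le.2 (Set.singleton_subset_iff.2 hx₀B) hzL
      exact ⟨⟨hzX, hzB⟩, span_singleton_eq_of_mem hz0 hzL⟩
  rw [hfib]
  exact lineCommute X hX0 t hrel hx₀X C (hBC hx₀B)

/-- If `z ∈ X` lies in `B ⊔ C` and `![B, C]` is a decomposition of `B ⊔ C`,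
then `z ∈ B` or `z ∈ C`. -/
lemma mem_or_mem_of_decomp (X : Finset (Module.Dual ℂ V)) (hX0 : (0 : Module.Dual ℂ V) ∉ X)
    (B C : Submodule ℂ (Module.Dual ℂ V)) (hdec : IsDecomp X (B ⊔ C) ![B, C])
    {z : Module.Dual ℂ V} (hzX : z ∈ X) (hzBC : z ∈ B ⊔ C) : z ∈ B ∨ z ∈ C := by
  by_contra hcon
  push_neg at hcon
  have hz0 : z ≠ 0 := fun h => hX0 (h ▸ hzX)
  obtain ⟨hd1, hd2, hd3⟩ := hdec
  have hInLat : InLat X (Submodule.span ℂ ({z} : Set (Module.Dual ℂ V))) :=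
    ⟨{z}, by simpa using hzX, by simp⟩
  have hne : Submodule.span ℂ ({z} : Set (Module.Dual ℂ V)) ≠ ⊥ := by
    simpa [Submodule.span_singleton_eq_bot] using hz0
  have hle : Submodule.span ℂ ({z} : Set (Module.Dual ℂ V)) ≤ B ⊔ C :=
    Submodule.span_le.2 (Set.singleton_subset_iff.2 hzBC)
  obtain ⟨-, hW⟩ := hd3 _ hInLat hne hle
  have hbot : ∀ i : Fin 2,
      Submodule.span ℂ ({z} : Set (Module.Dual ℂ V)) ⊓ ![B, C] i = ⊥ := by
    have key : ∀ D : Submodule ℂ (Module.Dual ℂ V), z ∉ D →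
        Submodule.span ℂ ({z} : Set (Module.Dual ℂ V)) ⊓ D = ⊥ := by
      intro D hzD
      rw [Submodule.eq_bot_iff]
      rintro w ⟨hw1, hw2⟩
      obtain ⟨a, rfl⟩ := Submodule.mem_span_singleton.1 hw1
      rcases eq_or_ne a 0 with rfl | ha
      · simp
      · exact absurd (by
          have : a⁻¹ • (a • z) ∈ D := Submodule.smul_mem _ _ hw2
          rwa [smul_smul, inv_mul_cancel₀ ha, one_smul] at this) hzD
    intro i
    fin_cases i
    · simpa using key B hcon.1
    · simpa using key C hcon.2
  refine hne ?_
  have := hW.1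
  rw [this]
  simp [hbot]

end AuxHol

/-- In the holonomy algebra of the arrangement defined by `X` (formalised
via the universal property: any algebra `A` with elements `t x` satisfying the flatness
relations `[t_x, ∑_{y ∈ X ∩ U} t_y] = 0` for every two-dimensional `U` spanned by elements
of `X`), the elements `t_B = ∑_{x ∈ X ∩ B} t_x` and `t_C` commute whenever `B`, `C` are
irreducible elements of the lattice forming a nested pair. -/
theorem stmt3 {V : Type*} [AddCommGroup V] [Module ℂ V] [FiniteDimensional ℂ V]
    (X : Finset (Module.Dual ℂ V)) (hX : (0 : Module.Dual ℂ V) ∉ X)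
    {A : Type*} [Ring A] (t : Module.Dual ℂ V → A)
    (hrel : ∀ U : Submodule ℂ (Module.Dual ℂ V), Module.finrank ℂ U = 2 →
      U = Submodule.span ℂ {x : Module.Dual ℂ V | x ∈ X ∧ x ∈ U} →
      ∀ x ∈ X, x ∈ U →
        Commute (t x) (∑ y ∈ X.filter (fun y => y ∈ U), t y))
    (B C : Submodule ℂ (Module.Dual ℂ V)) (hB : Irred X B) (hC : Irred X C)
    (hnested : B ≤ C ∨ C ≤ B ∨
      (Disjoint B C ∧ IsDecomp X (B ⊔ C) ![B, C])) :
    Commute (∑ x ∈ X.filter (fun x => x ∈ B), t x)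
      (∑ x ∈ X.filter (fun x => x ∈ C), t x) := by
  rcases hnested with hBC | hCB | ⟨hdisj, hdec⟩
  · exact subCommute X hX t hrel B C hBC
  · exact (subCommute X hX t hrel C B hCB).symm
  · -- the nested non-comparable case
    rw [Commute, SemiconjBy, ← sub_eq_zero]
    rw [Finset.sum_mul_sum, Finset.sum_mul_sum]
    rw [Finset.sum_comm (s := X.filter (fun x => x ∈ C))]
    rw [← Finset.sum_sub_distrib]
    simp_rw [← Finset.sum_sub_distrib]
    rw [← Finset.sum_product']
    set f : (Module.Dual ℂ V) × (Module.Dual ℂ V) → A :=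
      fun p => t p.1 * t p.2 - t p.2 * t p.1 with hfdef
    rw [← Finset.sum_fiberwise_of_maps_to
      (g := fun p : (Module.Dual ℂ V) × (Module.Dual ℂ V) =>
        Submodule.span ℂ ({p.1, p.2} : Set (Module.Dual ℂ V)))
      (fun p hp => Finset.mem_image_of_mem
        (fun p : (Module.Dual ℂ V) × (Module.Dual ℂ V) =>
          Submodule.span ℂ ({p.1, p.2} : Set (Module.Dual ℂ V))) hp) f]
    refine Finset.sum_eq_zero ?_
    intro P hP
    obtain ⟨⟨x₀, y₀⟩, hp, rfl⟩ := Finset.mem_image.1 hP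
    rw [Finset.mem_product, Finset.mem_filter, Finset.mem_filter] at hp
    obtain ⟨⟨hx₀X, hx₀B⟩, hy₀X, hy₀C⟩ := hp
    have hx₀0 : x₀ ≠ 0 := fun h => hX (h ▸ hx₀X)
    have hy₀0 : y₀ ≠ 0 := fun h => hX (h ▸ hy₀X)
    have hy₀L : y₀ ∉ Submodule.span ℂ ({x₀} : Set (Module.Dual ℂ V)) := by
      intro h
      have hy₀B : y₀ ∈ B := Submodule.span_le.2 (Set.singleton_subset_iff.2 hx₀B) h
      exact hy₀0 (Submodule.disjoint_def.1 hdisj _ hy₀B hy₀C)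
    set P := Submodule.span ℂ ({x₀, y₀} : Set (Module.Dual ℂ V)) with hPdef
    have hrank : Module.finrank ℂ P = 2 := finrank_span_pair' hx₀0 hy₀L
    have hspan := span_pair_spanning X hx₀X hy₀X
    have hPBC : P ≤ B ⊔ C := Submodule.span_le.2 (by
      rintro w (rfl | rfl)
      · exact Submodule.mem_sup_left hx₀B
      · exact Submodule.mem_sup_right hy₀C)
    -- membership in P ∩ B forces lying on the line through x₀
    have memlineB : ∀ w ∈ P, w ∈ B → w ∈ Submodule.span ℂ ({x₀} : Set (Module.Dual ℂ V)) := by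
      intro w hwP hwB
      obtain ⟨a, b, hab⟩ := Submodule.mem_span_pair.1 hwP
      have hbmem : b • y₀ = w - a • x₀ := by rw [← hab]; abel
      have hbB : b • y₀ ∈ B := hbmem ▸ Submodule.sub_mem _ hwB (Submodule.smul_mem _ _ hx₀B)
      have hbC : b • y₀ ∈ C := Submodule.smul_mem _ _ hy₀C
      have hb0 : b • y₀ = 0 := Submodule.disjoint_def.1 hdisj _ hbB hbC
      refine Submodule.mem_span_singleton.2 ⟨a, ?_⟩
      rw [← hab, hb0, add_zero]
    have memlineC : ∀ w ∈ P, w ∈ C → w ∈ Submodule.span ℂ ({y₀} : Set (Module.Dual ℂ V)) := by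
      intro w hwP hwC
      obtain ⟨a, b, hab⟩ := Submodule.mem_span_pair.1 hwP
      have hbmem : a • x₀ = w - b • y₀ := by rw [← hab]; abel
      have haB : a • x₀ ∈ B := Submodule.smul_mem _ _ hx₀B
      have haC : a • x₀ ∈ C := hbmem ▸ Submodule.sub_mem _ hwC (Submodule.smul_mem _ _ hy₀C)
      have ha0 : a • x₀ = 0 := Submodule.disjoint_def.1 hdisj _ haB haC
      refine Submodule.mem_span_singleton.2 ⟨b, ?_⟩
      rw [← hab, ha0, zero_add]
    set PB := (X.filter (fun x => x ∈ B)).filter (fun x => x ∈ P) with hPBdef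
    set PC := (X.filter (fun x => x ∈ C)).filter (fun x => x ∈ P) with hPCdef
    have hunion : X.filter (fun y => y ∈ P) = PB ∪ PC := by
      ext z
      simp only [hPBdef, hPCdef, Finset.mem_union, Finset.mem_filter]
      constructor
      · rintro ⟨hzX, hzP⟩
        rcases mem_or_mem_of_decomp X hX B C hdec hzX (hPBC hzP) with h | h
        · exact Or.inl ⟨⟨hzX, h⟩, hzP⟩
        · exact Or.inr ⟨⟨hzX, h⟩, hzP⟩
      · rintro (⟨⟨hzX, _⟩, hzP⟩ | ⟨⟨hzX, _⟩, hzP⟩) <;> exact ⟨hzX, hzP⟩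
    have hdisjf : Disjoint PB PC := by
      rw [Finset.disjoint_left]
      rintro z hz1 hz2
      rw [hPBdef, Finset.mem_filter, Finset.mem_filter] at hz1
      rw [hPCdef, Finset.mem_filter, Finset.mem_filter] at hz2
      have hz0 : z ≠ 0 := fun h => hX (h ▸ hz1.1.1)
      exact hz0 (Submodule.disjoint_def.1 hdisj _ hz1.1.2 hz2.1.2)
    have hcommBC : Commute (∑ w ∈ PB, t w) (∑ w ∈ PC, t w) := by
      have hcommP : Commute (∑ w ∈ PB, t w) (∑ y ∈ X.filter (fun y => y ∈ P), t y) := by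
        refine Commute.sum_left _ _ _ ?_
        intro w hw
        rw [hPBdef, Finset.mem_filter, Finset.mem_filter] at hw
        exact hrel P hrank hspan w hw.1.1 hw.2
      rw [hunion, Finset.sum_union hdisjf] at hcommP
      have := hcommP.sub_right (Commute.refl (∑ w ∈ PB, t w))
      simpa using this
    have hfib : ((X.filter (fun x => x ∈ B)) ×ˢ (X.filter (fun x => x ∈ C))).filter
        (fun p => Submodule.span ℂ ({p.1, p.2} : Set (Module.Dual ℂ V)) = P) =
        PB ×ˢ PC := by
      ext ⟨x, y⟩
      simp only [Finset.mem_filter, Finset.mem_product, hPBdef, hPCdef]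
      constructor
      · rintro ⟨⟨⟨hxX, hxB⟩, hyX, hyC⟩, hxyP⟩
        refine ⟨⟨⟨hxX, hxB⟩, hxyP ▸ Submodule.subset_span (Set.mem_insert _ _)⟩,
          ⟨hyX, hyC⟩, hxyP ▸ Submodule.subset_span (Set.mem_insert_of_mem _ rfl)⟩
      · rintro ⟨⟨⟨hxX, hxB⟩, hxP⟩, ⟨hyX, hyC⟩, hyP⟩
        refine ⟨⟨⟨hxX, hxB⟩, hyX, hyC⟩, ?_⟩
        have hx0 : x ≠ 0 := fun h => hX (h ▸ hxX)
        have hy0 : y ≠ 0 := fun h => hX (h ▸ hyX)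
        have hxline := memlineB x hxP hxB
        have hyline := memlineC y hyP hyC
        have h1 : Submodule.span ℂ ({x} : Set (Module.Dual ℂ V)) =
            Submodule.span ℂ ({x₀} : Set (Module.Dual ℂ V)) :=
          span_singleton_eq_of_mem hx0 hxline
        have h2 : Submodule.span ℂ ({y} : Set (Module.Dual ℂ V)) =
            Submodule.span ℂ ({y₀} : Set (Module.Dual ℂ V)) :=
          span_singleton_eq_of_mem hy0 hyline
        rw [show ({x, y} : Set (Module.Dual ℂ V)) = insert x {y} from rfl,
          Submodule.span_insert, h1, h2, hPdef,
          show ({x₀, y₀} : Set (Module.Dual ℂ V)) = insert x₀ {y₀} from rfl,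
          Submodule.span_insert]
    rw [hfib, Finset.sum_product]
    have h2 : (∑ x ∈ PB, t x) * (∑ y ∈ PC, t y) - (∑ y ∈ PC, t y) * (∑ x ∈ PB, t x)
        = ∑ x ∈ PB, ∑ y ∈ PC, (t x * t y - t y * t x) := by
      rw [Finset.sum_mul_sum, Finset.sum_mul_sum,
        Finset.sum_comm (s := PC) (t := PB), ← Finset.sum_sub_distrib]
      exact Finset.sum_congr rfl fun x hx => (Finset.sum_sub_distrib _ _).symm
    simp_rw [hfdef]
    rw [← h2, sub_eq_zero]
    exact hcommBC.eq
end

section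
/- Let D be a connected finite graph, B a proper subdiagram of D with connected components B_1,...,B_m, and D/B the quotient graph with vertex set V(D)\V(B), where distinct vertices α, β of D/B are joined if they are joined in D or there is some i with both α and β adjacent (in D) to some vertex of B_i. For a connected subdiagram A of D/B, let Ã be the subdiagram of D with vertex set V(A) together with the V(B_i) for those i with B_i not orthogonal to A. Then the maps C ↦ C̄ (vertex set V(C)\V(B)) and A ↦ Ã are mutually inverse bijections between the set of connected subdiagrams of D which are either orthogonal to each B_i or strictly contain each B_i they meet (precisely: compatible with every B_i and not contained in B), and the set of connected subdiagrams of D/B; moreover, this bijection preserves compatibility when restricted to subdiagrams of D compatible with all B_i. -/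
open scoped Classical

section Quotient

variable {V : Type*} [Fintype V] [DecidableEq V]

/-- The quotient diagram `D/B`: vertices are the vertices of `D` outside `B`, and two
distinct such vertices are joined iff they are joined in `D` or both are adjacent (in `D`)
to a common connected component of `B` (the components being given by `comps`). -/
def quotGraph (Gr : SimpleGraph V) (B : Finset V) (comps : Finset (Finset V)) :
    SimpleGraph V where
  Adj a b := a ≠ b ∧ a ∉ B ∧ b ∉ B ∧
    (Gr.Adj a b ∨ ∃ Bi ∈ comps, (∃ u ∈ Bi, Gr.Adj a u) ∧ ∃ w ∈ Bi, Gr.Adj b w)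
  symm := by
    constructor
    rintro a b ⟨h1, h2, h3, h4⟩
    refine ⟨h1.symm, h3, h2, ?_⟩
    rcases h4 with h | ⟨Bi, hBi, hu, hw⟩
    · exact Or.inl h.symm
    · exact Or.inr ⟨Bi, hBi, hw, hu⟩
  loopless := by constructor; rintro a ⟨h1, -⟩; exact h1 rfl

/-- Lifting a connected subdiagram `A` of `D/B` to `D`: adjoin the connected components
of `B` which are not orthogonal to `A`. -/
noncomputable def liftQ (Gr : SimpleGraph V) (comps : Finset (Finset V)) (A : Finset V) :
    Finset V :=
  A ∪ (comps.filter fun Bi => ¬ Orth Gr Bi A).sup id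

end Quotient


section StmtHelpers

variable {V : Type*} [Fintype V] [DecidableEq V] {G : SimpleGraph V}

def RIn (G : SimpleGraph V) (S : Finset V) : V → V → Prop :=
  Relation.ReflTransGen (fun a b => a ∈ S ∧ b ∈ S ∧ G.Adj a b)

lemma RIn.mono {S T : Finset V} (h : S ⊆ T) {u v : V} (hr : RIn G S u v) : RIn G T u v :=
  Relation.ReflTransGen.mono (fun _ _ hab => ⟨h hab.1, h hab.2.1, hab.2.2⟩) _ _ hr

lemma RIn.symm {S : Finset V} {u v : V} (hr : RIn G S u v) : RIn G S v u :=
  by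
    haveI : Std.Symm (fun a b : V => a ∈ S ∧ b ∈ S ∧ G.Adj a b) :=
      ⟨fun _ _ hab => ⟨hab.2.1, hab.1, hab.2.2.symm⟩⟩
    exact Relation.ReflTransGen.stdSymm.symm _ _ hr

lemma walk_to_RIn {S : Finset V} : ∀ {x y : ((S : Set V) : Type _)},
    (G.induce (S : Set V)).Walk x y → RIn G S x y := by
  intro x y w
  induction w with
  | nil => exact Relation.ReflTransGen.refl
  | @cons a b c h _ ih =>
      exact Relation.ReflTransGen.head ⟨by exact_mod_cast a.2, by exact_mod_cast b.2, h⟩ ih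

lemma conn_iff {S : Finset V} :
    Conn G S ↔ S.Nonempty ∧ ∀ u ∈ S, ∀ v ∈ S, RIn G S u v := by
  constructor
  · intro h
    refine ⟨?_, ?_⟩
    · obtain ⟨⟨v, hv⟩⟩ := h.nonempty
      exact ⟨v, hv⟩
    · intro u hu v hv
      exact walk_to_RIn ((h.preconnected ⟨u, hu⟩ ⟨v, hv⟩).some)
  · rintro ⟨⟨w, hw⟩, hr⟩
    rw [Conn, SimpleGraph.connected_iff]
    refine ⟨?_, ⟨⟨w, hw⟩⟩⟩
    rintro ⟨u, hu⟩ ⟨v, hv⟩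
    have h : RIn G S u v := hr u hu v hv
    clear hr
    have key : ∃ hv' : v ∈ S, (G.induce (S:Set V)).Reachable ⟨u, hu⟩ ⟨v, hv'⟩ := by
      clear hv
      induction h with
      | refl => exact ⟨hu, by rfl⟩
      | tail _ hstep ih =>
          obtain ⟨hb, r⟩ := ih
          exact ⟨hstep.2.1, r.trans (SimpleGraph.Adj.reachable
            (by exact_mod_cast hstep.2.2 :
              (G.induce (S:Set V)).Adj ⟨_, hb⟩ ⟨_, hstep.2.1⟩))⟩
    obtain ⟨hv', r⟩ := key
    exact r

lemma conn_singleton (v : V) : Conn G {v} := by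
  rw [conn_iff]
  refine ⟨⟨v, Finset.mem_singleton_self v⟩, ?_⟩
  intro u hu w hw
  rw [Finset.mem_singleton] at hu hw
  subst hu; subst hw
  exact Relation.ReflTransGen.refl

lemma Conn.nonempty' {S : Finset V} (h : Conn G S) : S.Nonempty := (conn_iff.mp h).1

lemma not_orth_iff {X Y : Finset V} : ¬ Orth G X Y ↔ ∃ a ∈ X, ∃ b ∈ Y, G.Adj a b := by
  unfold Orth; push_neg; rfl

lemma conn_union {X Y : Finset V} (hX : Conn G X) (hY : Conn G Y)
    (hlink : ∃ x ∈ X, ∃ y ∈ Y, x = y ∨ G.Adj x y) : Conn G (X ∪ Y) := by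
  obtain ⟨x, hx, y, hy, hxy⟩ := hlink
  rw [conn_iff] at hX hY ⊢
  obtain ⟨hXne, hXr⟩ := hX
  obtain ⟨hYne, hYr⟩ := hY
  have hbridge : RIn G (X ∪ Y) x y := by
    rcases hxy with rfl | hadj
    · exact Relation.ReflTransGen.refl
    · exact Relation.ReflTransGen.single
        ⟨Finset.mem_union_left _ hx, Finset.mem_union_right _ hy, hadj⟩
  have hX' : ∀ u ∈ X, RIn G (X ∪ Y) u x := fun u hu =>
    (hXr u hu x hx).mono Finset.subset_union_left
  have hY' : ∀ u ∈ Y, RIn G (X ∪ Y) y u := fun u hu =>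
    (hYr y hy u hu).mono Finset.subset_union_right
  refine ⟨⟨x, Finset.mem_union_left _ hx⟩, ?_⟩
  intro u hu v hv
  rcases Finset.mem_union.mp hu with hu' | hu' <;> rcases Finset.mem_union.mp hv with hv' | hv'
  · exact (hXr u hu' v hv').mono Finset.subset_union_left
  · exact ((hX' u hu').trans hbridge).trans (hY' v hv')
  · exact (((hY' u hu').symm.trans hbridge.symm).trans ((hX' v hv').symm : RIn G (X ∪ Y) x v))
  · exact (hYr u hu' v hv').mono Finset.subset_union_right

lemma exists_adj_of_conn {C : Finset V} {x v : V} (hC : Conn G C) (hx : x ∈ C) (hv : v ∈ C)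
    (hne : v ≠ x) : ∃ y ∈ C, G.Adj x y := by
  have h : RIn G C x v := (conn_iff.mp hC).2 x hx v hv
  rcases h.cases_head with rfl | ⟨c, hc, -⟩
  · exact absurd rfl hne
  · exact ⟨c, hc.2.1, hc.2.2⟩

section Comps
variable {B : Finset V} {comps : Finset (Finset V)}

lemma exists_comp (hcomps : ∀ C : Finset V, C ∈ comps ↔ IsCC G B C) {v : V} (hv : v ∈ B) :
    ∃ Bi ∈ comps, v ∈ Bi := by
  classical
  set s : Finset (Finset V) :=
    Finset.univ.filter (fun C => C ⊆ B ∧ Conn G C ∧ v ∈ C) with hs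
  have hsne : s.Nonempty := by
    refine ⟨{v}, ?_⟩
    simp only [hs, Finset.mem_filter, Finset.mem_univ, true_and]
    exact ⟨Finset.singleton_subset_iff.mpr hv, conn_singleton v, Finset.mem_singleton_self v⟩
  obtain ⟨C, hCs, hmax⟩ := s.exists_max_image Finset.card hsne
  simp only [hs, Finset.mem_filter, Finset.mem_univ, true_and] at hCs
  obtain ⟨hCB, hCconn, hvC⟩ := hCs
  refine ⟨C, (hcomps C).mpr ⟨hCB, hCconn, ?_⟩, hvC⟩
  intro C' hCC' hC'B hC'conn
  have : C' ∈ s := by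
    simp only [hs, Finset.mem_filter, Finset.mem_univ, true_and]
    exact ⟨hC'B, hC'conn, hCC' hvC⟩
  exact (Finset.eq_of_subset_of_card_le hCC' (hmax C' this)).symm

lemma comp_subset (hcomps : ∀ C : Finset V, C ∈ comps ↔ IsCC G B C) {Bi : Finset V}
    (hBi : Bi ∈ comps) : Bi ⊆ B := ((hcomps Bi).mp hBi).1

lemma comp_conn (hcomps : ∀ C : Finset V, C ∈ comps ↔ IsCC G B C) {Bi : Finset V}
    (hBi : Bi ∈ comps) : Conn G Bi := ((hcomps Bi).mp hBi).2.1

lemma adj_mem_comp (hcomps : ∀ C : Finset V, C ∈ comps ↔ IsCC G B C) {Bi : Finset V}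
    (hBi : Bi ∈ comps) {a b : V} (ha : a ∈ Bi) (hb : b ∈ B) (hab : G.Adj a b) : b ∈ Bi := by
  obtain ⟨hBiB, hBiconn, hmax⟩ := (hcomps Bi).mp hBi
  have hconn : Conn G (Bi ∪ {b}) :=
    conn_union hBiconn (conn_singleton b) ⟨a, ha, b, Finset.mem_singleton_self b, Or.inr hab⟩
  have := hmax (Bi ∪ {b}) Finset.subset_union_left
    (Finset.union_subset hBiB (Finset.singleton_subset_iff.mpr hb)) hconn
  rw [← this]
  exact Finset.mem_union_right _ (Finset.mem_singleton_self b)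

lemma comp_unique (hcomps : ∀ C : Finset V, C ∈ comps ↔ IsCC G B C) {Bi Bj : Finset V}
    (hBi : Bi ∈ comps) (hBj : Bj ∈ comps) {v : V} (hvi : v ∈ Bi) (hvj : v ∈ Bj) : Bi = Bj := by
  obtain ⟨hBiB, hBiconn, hmaxi⟩ := (hcomps Bi).mp hBi
  obtain ⟨hBjB, hBjconn, hmaxj⟩ := (hcomps Bj).mp hBj
  have hconn : Conn G (Bi ∪ Bj) := conn_union hBiconn hBjconn ⟨v, hvi, v, hvj, Or.inl rfl⟩
  have h1 := hmaxi (Bi ∪ Bj) Finset.subset_union_left (Finset.union_subset hBiB hBjB) hconn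
  have h2 := hmaxj (Bi ∪ Bj) Finset.subset_union_right (Finset.union_subset hBiB hBjB) hconn
  exact h1.symm.trans h2

lemma comp_orth (hcomps : ∀ C : Finset V, C ∈ comps ↔ IsCC G B C) {Bi Bj : Finset V}
    (hBi : Bi ∈ comps) (hBj : Bj ∈ comps) (hne : Bi ≠ Bj) : Orth G Bi Bj := by
  intro a ha b hb hab
  have : b ∈ Bi := adj_mem_comp hcomps hBi ha (comp_subset hcomps hBj hb) hab
  exact hne (comp_unique hcomps hBi hBj this hb)

lemma exists_exit (hcomps : ∀ C : Finset V, C ∈ comps ↔ IsCC G B C) {Bi C : Finset V}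
    (hBi : Bi ∈ comps) (hBiC : Bi ⊆ C) (hC : Conn G C) (hnC : ¬ C ⊆ B) :
    ∃ z ∈ C \ B, ∃ b ∈ Bi, G.Adj z b := by
  obtain ⟨v, hvC, hvB⟩ := Finset.not_subset.mp hnC
  obtain ⟨u, hu⟩ := (comp_conn hcomps hBi).nonempty'
  have hr : RIn G C u v := (conn_iff.mp hC).2 u (hBiC hu) v hvC
  revert hu
  induction hr using Relation.ReflTransGen.head_induction_on with
  | refl => intro hu; exact absurd (comp_subset hcomps hBi hu) hvB
  | @head a c hstep _ ih =>
      intro hu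
      by_cases hcB : c ∈ B
      · exact ih (adj_mem_comp hcomps hBi hu hcB hstep.2.2)
      · exact ⟨c, Finset.mem_sdiff.mpr ⟨hstep.2.1, hcB⟩, a, hu, hstep.2.2.symm⟩

lemma comp_sub (hcomps : ∀ C : Finset V, C ∈ comps ↔ IsCC G B C) {Bi C : Finset V}
    (hBi : Bi ∈ comps) {x : V} (hx : x ∈ Bi) (hxC : x ∈ C) (hC : Conn G C)
    (hcompat : Compat G C Bi) (hnC : ¬ C ⊆ B) : Bi ⊆ C := by
  obtain ⟨v, hvC, hvB⟩ := Finset.not_subset.mp hnC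
  have hxB : x ∈ B := comp_subset hcomps hBi hx
  have hne : v ≠ x := fun h => hvB (h ▸ hxB)
  obtain ⟨y, hyC, hxy⟩ := exists_adj_of_conn hC hxC hvC hne
  rcases hcompat with h | h | h
  · exact absurd (comp_subset hcomps hBi (h hvC)) hvB
  · exact h
  · exact absurd hxy.symm (h y hyC x hx)

lemma quot_adj' (a b : V) :
    (quotGraph G B comps).Adj a b ↔ a ≠ b ∧ a ∉ B ∧ b ∉ B ∧
    (G.Adj a b ∨ ∃ Bi ∈ comps, (∃ u ∈ Bi, G.Adj a u) ∧ ∃ w ∈ Bi, G.Adj b w) := Iff.rfl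

lemma quot_reach (hcomps : ∀ C : Finset V, C ∈ comps ↔ IsCC G B C) {C : Finset V} {v : V}
    (hv : v ∈ C \ B) :
    ∀ {u : V}, RIn G C u v →
      (u ∉ B → RIn (quotGraph G B comps) (C \ B) u v) ∧
      (∀ Bi ∈ comps, u ∈ Bi → ∃ z ∈ C \ B, (∃ b ∈ Bi, G.Adj z b) ∧
        RIn (quotGraph G B comps) (C \ B) z v) := by
  intro u hr
  induction hr using Relation.ReflTransGen.head_induction_on with
  | refl =>
      exact ⟨fun _ => Relation.ReflTransGen.refl,
        fun Bi hBi hu => absurd (comp_subset hcomps hBi hu) (Finset.mem_sdiff.mp hv).2⟩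
  | @head a c hstep htail ih =>
      obtain ⟨haC, hcC, hadj⟩ := hstep
      constructor
      · intro haB
        by_cases hcB : c ∈ B
        · obtain ⟨Bj, hBj, hcBj⟩ := exists_comp hcomps hcB
          obtain ⟨z, hz, ⟨b, hbBj, hzb⟩, hrz⟩ := ih.2 Bj hBj hcBj
          by_cases haz : a = z
          · exact haz ▸ hrz
          · refine Relation.ReflTransGen.head ⟨Finset.mem_sdiff.mpr ⟨haC, haB⟩, hz, ?_⟩ hrz
            exact (quot_adj' a z).mpr ⟨haz, haB, (Finset.mem_sdiff.mp hz).2,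
              Or.inr ⟨Bj, hBj, ⟨c, hcBj, hadj⟩, ⟨b, hbBj, hzb⟩⟩⟩
        · refine Relation.ReflTransGen.head
            ⟨Finset.mem_sdiff.mpr ⟨haC, haB⟩, Finset.mem_sdiff.mpr ⟨hcC, hcB⟩,
              (quot_adj' a c).mpr ⟨hadj.ne, haB, hcB, Or.inl hadj⟩⟩ (ih.1 hcB)
      · intro Bi hBi hu
        by_cases hcB : c ∈ B
        · exact ih.2 Bi hBi (adj_mem_comp hcomps hBi hu hcB hadj)
        · exact ⟨c, Finset.mem_sdiff.mpr ⟨hcC, hcB⟩, ⟨a, hu, hadj.symm⟩, ih.1 hcB⟩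

lemma part2_conn (hcomps : ∀ C : Finset V, C ∈ comps ↔ IsCC G B C) {C : Finset V}
    (hC : Conn G C) (hnC : ¬ C ⊆ B) : Conn (quotGraph G B comps) (C \ B) := by
  obtain ⟨w, hwC, hwB⟩ := Finset.not_subset.mp hnC
  rw [conn_iff]
  refine ⟨⟨w, Finset.mem_sdiff.mpr ⟨hwC, hwB⟩⟩, ?_⟩
  intro u hu v hv
  have hr := (conn_iff.mp hC).2 u (Finset.mem_sdiff.mp hu).1 v (Finset.mem_sdiff.mp hv).1
  exact (quot_reach hcomps hv hr).1 (Finset.mem_sdiff.mp hu).2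

lemma mem_liftQ {A : Finset V} {x : V} :
    x ∈ liftQ G comps A ↔ x ∈ A ∨ ∃ Bi ∈ comps, ¬ Orth G Bi A ∧ x ∈ Bi := by
  unfold liftQ
  simp only [Finset.mem_union, Finset.mem_sup, Finset.mem_filter, id_eq]
  constructor
  · rintro (h | ⟨Bi, ⟨h1, h2⟩, h3⟩)
    · exact Or.inl h
    · exact Or.inr ⟨Bi, h1, h2, h3⟩
  · rintro (h | ⟨Bi, h1, h2, h3⟩)
    · exact Or.inl h
    · exact Or.inr ⟨Bi, ⟨h1, h2⟩, h3⟩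

lemma lift_mono {A A' : Finset V} (h : A ⊆ A') : liftQ G comps A ⊆ liftQ G comps A' := by
  intro x hx
  rcases mem_liftQ.mp hx with hxA | ⟨Bi, hBi, hO, hxi⟩
  · exact mem_liftQ.mpr (Or.inl (h hxA))
  · exact mem_liftQ.mpr
      (Or.inr ⟨Bi, hBi, fun hO' => hO (fun a ha b hb => hO' a ha b (h hb)), hxi⟩)

lemma lift_sdiff (hcomps : ∀ C : Finset V, C ∈ comps ↔ IsCC G B C) {A : Finset V}
    (hdisj : Disjoint A B) : liftQ G comps A \ B = A := by
  ext x
  simp only [Finset.mem_sdiff]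
  constructor
  · rintro ⟨hx, hxB⟩
    rcases mem_liftQ.mp hx with h | ⟨Bi, hBi, _, hxi⟩
    · exact h
    · exact absurd (comp_subset hcomps hBi hxi) hxB
  · intro h
    exact ⟨mem_liftQ.mpr (Or.inl h), fun hB => (Finset.disjoint_left.mp hdisj) h hB⟩

lemma lift_conn (hcomps : ∀ C : Finset V, C ∈ comps ↔ IsCC G B C) {A : Finset V}
    (hA : Conn (quotGraph G B comps) A) : Conn G (liftQ G comps A) := by
  set T := liftQ G comps A with hT
  have hAT : A ⊆ T := Finset.subset_union_left
  have hBiT : ∀ Bi ∈ comps, ¬ Orth G Bi A → Bi ⊆ T := by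
    intro Bi hBi hO x hx
    exact mem_liftQ.mpr (Or.inr ⟨Bi, hBi, hO, hx⟩)
  have step : ∀ a ∈ A, ∀ b ∈ A, (quotGraph G B comps).Adj a b → RIn G T a b := by
    intro a ha b hb hadj
    obtain ⟨hne, haB, hbB, h | ⟨Bi, hBi, ⟨u, hu, hau⟩, ⟨w, hw, hbw⟩⟩⟩ := (quot_adj' a b).mp hadj
    · exact Relation.ReflTransGen.single ⟨hAT ha, hAT hb, h⟩
    · have hnO : ¬ Orth G Bi A := fun hO => hO u hu a ha hau.symm
      have hBiT' := hBiT Bi hBi hnO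
      have h1 : RIn G T u w := ((conn_iff.mp (comp_conn hcomps hBi)).2 u hu w hw).mono hBiT'
      refine Relation.ReflTransGen.head ⟨hAT ha, hBiT' hu, hau⟩ (h1.trans ?_)
      exact Relation.ReflTransGen.single ⟨hBiT' hw, hAT hb, hbw.symm⟩
  have quotmap : ∀ {u v : V}, RIn (quotGraph G B comps) A u v → RIn G T u v := by
    intro u v hr
    induction hr with
    | refl => exact Relation.ReflTransGen.refl
    | tail _ hstep ih => exact ih.trans (step _ hstep.1 _ hstep.2.1 hstep.2.2)
  have toA : ∀ u ∈ T, ∃ a ∈ A, RIn G T u a := by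
    intro u hu
    rcases mem_liftQ.mp hu with h | ⟨Bi, hBi, hO, hui⟩
    · exact ⟨u, h, Relation.ReflTransGen.refl⟩
    · have hBiT' := hBiT Bi hBi hO
      obtain ⟨p, hp, q, hq, hpq⟩ := not_orth_iff.mp hO
      have hup : RIn G T u p := ((conn_iff.mp (comp_conn hcomps hBi)).2 u hui p hp).mono hBiT'
      exact ⟨q, hq, hup.tail ⟨hBiT' hp, hAT hq, hpq⟩⟩
  rw [conn_iff]
  obtain ⟨a0, ha0⟩ := hA.nonempty'
  refine ⟨⟨a0, hAT ha0⟩, ?_⟩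
  intro u hu v hv
  obtain ⟨au, hau, hru⟩ := toA u hu
  obtain ⟨av, hav, hrv⟩ := toA v hv
  exact (hru.trans (quotmap ((conn_iff.mp hA).2 au hau av hav))).trans hrv.symm

lemma lift_compat (hcomps : ∀ C : Finset V, C ∈ comps ↔ IsCC G B C) {A : Finset V} :
    ∀ Bi ∈ comps, Compat G (liftQ G comps A) Bi := by
  intro Bi hBi
  by_cases hO : Orth G Bi A
  · refine Or.inr (Or.inr ?_)
    intro x hx y hy hxy
    rcases mem_liftQ.mp hx with h | ⟨Bj, hBj, hOj, hxj⟩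
    · exact hO y hy x h hxy.symm
    · have hne : Bj ≠ Bi := fun h' => hOj (h' ▸ hO)
      exact comp_orth hcomps hBj hBi hne x hxj y hy hxy
  · exact Or.inr (Or.inl (fun x hx => mem_liftQ.mpr (Or.inr ⟨Bi, hBi, hO, hx⟩)))

lemma not_orth_sub (hcomps : ∀ C : Finset V, C ∈ comps ↔ IsCC G B C) {C Bi : Finset V}
    (hcompat : Compat G C Bi) (hBi : Bi ∈ comps) (hnO : ¬ Orth G Bi (C \ B)) : Bi ⊆ C := by
  obtain ⟨b, hb, z, hz, hbz⟩ := not_orth_iff.mp hnO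
  obtain ⟨hzC, hzB⟩ := Finset.mem_sdiff.mp hz
  rcases hcompat with h | h | h
  · exact absurd (comp_subset hcomps hBi (h hzC)) hzB
  · exact h
  · exact absurd hbz.symm (h z hzC b hb)

lemma lift_eq (hcomps : ∀ C : Finset V, C ∈ comps ↔ IsCC G B C) {C : Finset V}
    (hC : Conn G C) (hcompat : ∀ Bi ∈ comps, Compat G C Bi)
    (hnC : ¬ C ⊆ B) : liftQ G comps (C \ B) = C := by
  apply Finset.Subset.antisymm
  · intro x hx
    rcases mem_liftQ.mp hx with h | ⟨Bi, hBi, hO, hxi⟩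
    · exact (Finset.mem_sdiff.mp h).1
    · exact not_orth_sub hcomps (hcompat Bi hBi) hBi hO hxi
  · intro x hx
    by_cases hxB : x ∈ B
    · obtain ⟨Bi, hBi, hxi⟩ := exists_comp hcomps hxB
      have hBiC : Bi ⊆ C := comp_sub hcomps hBi hxi hx hC (hcompat Bi hBi) hnC
      obtain ⟨z, hz, b, hb, hzb⟩ := exists_exit hcomps hBi hBiC hC hnC
      have hnO : ¬ Orth G Bi (C \ B) := fun hO => hO b hb z hz hzb.symm
      exact mem_liftQ.mpr (Or.inr ⟨Bi, hBi, hnO, hxi⟩)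
    · exact mem_liftQ.mpr (Or.inl (Finset.mem_sdiff.mpr ⟨hx, hxB⟩))

end Comps
end StmtHelpers

/-- The maps `C ↦ C \ B` and `A ↦ Ã` are mutually inverse bijections
between the connected subdiagrams of `D` compatible with every connected component of `B`
and not contained in `B`, and the connected subdiagrams of `D/B`; moreover this bijection
preserves compatibility. -/
theorem stmt4 {V : Type*} [Fintype V] [DecidableEq V]
    (Gr : SimpleGraph V) (hGr : Gr.Connected)
    (B : Finset V) (hBne : B.Nonempty) (hBproper : B ≠ Finset.univ)
    (comps : Finset (Finset V)) (hcomps : ∀ C : Finset V, C ∈ comps ↔ IsCC Gr B C) :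
    (∀ A : Finset V, Conn (quotGraph Gr B comps) A → Disjoint A B →
      (Conn Gr (liftQ Gr comps A) ∧
       (∀ Bi ∈ comps, Compat Gr (liftQ Gr comps A) Bi) ∧
       ¬ liftQ Gr comps A ⊆ B) ∧
      liftQ Gr comps A \ B = A) ∧
    (∀ C : Finset V, Conn Gr C → (∀ Bi ∈ comps, Compat Gr C Bi) → ¬ C ⊆ B →
      (Conn (quotGraph Gr B comps) (C \ B) ∧ Disjoint (C \ B) B) ∧
      liftQ Gr comps (C \ B) = C) ∧
    (∀ C₁ C₂ : Finset V,
      (Conn Gr C₁ ∧ (∀ Bi ∈ comps, Compat Gr C₁ Bi) ∧ ¬ C₁ ⊆ B) →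
      (Conn Gr C₂ ∧ (∀ Bi ∈ comps, Compat Gr C₂ Bi) ∧ ¬ C₂ ⊆ B) →
      (Compat Gr C₁ C₂ ↔ Compat (quotGraph Gr B comps) (C₁ \ B) (C₂ \ B))) := by
  clear hGr hBne hBproper
  have P1 : ∀ A : Finset V, Conn (quotGraph Gr B comps) A → Disjoint A B →
      (Conn Gr (liftQ Gr comps A) ∧
       (∀ Bi ∈ comps, Compat Gr (liftQ Gr comps A) Bi) ∧
       ¬ liftQ Gr comps A ⊆ B) ∧
      liftQ Gr comps A \ B = A := by
    intro A hA hdisj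
    refine ⟨⟨lift_conn hcomps hA, lift_compat hcomps, ?_⟩, lift_sdiff hcomps hdisj⟩
    intro hsub
    obtain ⟨a, ha⟩ := hA.nonempty'
    exact (Finset.disjoint_left.mp hdisj) ha (hsub (mem_liftQ.mpr (Or.inl ha)))
  have P2 : ∀ C : Finset V, Conn Gr C → (∀ Bi ∈ comps, Compat Gr C Bi) → ¬ C ⊆ B →
      (Conn (quotGraph Gr B comps) (C \ B) ∧ Disjoint (C \ B) B) ∧
      liftQ Gr comps (C \ B) = C := fun C hC hcompat hnC =>
    ⟨⟨part2_conn hcomps hC hnC, Finset.sdiff_disjoint⟩, lift_eq hcomps hC hcompat hnC⟩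
  refine ⟨P1, P2, ?_⟩
  rintro C₁ C₂ ⟨h1c, h1k, h1n⟩ ⟨h2c, h2k, h2n⟩
  have e1 := lift_eq hcomps h1c h1k h1n
  have e2 := lift_eq hcomps h2c h2k h2n
  constructor
  · rintro (h | h | h)
    · exact Or.inl (Finset.sdiff_subset_sdiff h (Finset.Subset.refl _))
    · exact Or.inr (Or.inl (Finset.sdiff_subset_sdiff h (Finset.Subset.refl _)))
    · refine Or.inr (Or.inr ?_)
      intro a ha b hb hadj
      obtain ⟨haC, haB⟩ := Finset.mem_sdiff.mp ha
      obtain ⟨hbC, hbB⟩ := Finset.mem_sdiff.mp hb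
      obtain ⟨hne, -, -, hg | ⟨Bi, hBi, ⟨u, hu, hau⟩, ⟨w, hw, hbw⟩⟩⟩ := (quot_adj' a b).mp hadj
      · exact h a haC b hbC hg
      · have hBiC2 : Bi ⊆ C₂ := by
          rcases h2k Bi hBi with h' | h' | h'
          · exact absurd (comp_subset hcomps hBi (h' hbC)) hbB
          · exact h'
          · exact absurd hbw (h' b hbC w hw)
        exact h a haC u (hBiC2 hu) hau
  · rintro (h | h | h)
    · refine Or.inl ?_
      have := lift_mono (G := Gr) (comps := comps) h
      rwa [e1, e2] at this
    · refine Or.inr (Or.inl ?_)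
      have := lift_mono (G := Gr) (comps := comps) h
      rwa [e1, e2] at this
    · by_cases hint : ∃ v, v ∈ C₁ \ B ∧ v ∈ C₂ \ B
      · obtain ⟨v, hv1, hv2⟩ := hint
        have hc1 := part2_conn hcomps h1c h1n
        have hc2 := part2_conn hcomps h2c h2n
        have hD1 : C₁ \ B = {v} := by
          apply Finset.eq_singleton_iff_unique_mem.mpr
          refine ⟨hv1, ?_⟩
          intro w hw
          by_contra hwv
          obtain ⟨y, hy, hvy⟩ := exists_adj_of_conn hc1 hv1 hw hwv
          exact h y hy v hv2 hvy.symm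
        have hD2 : C₂ \ B = {v} := by
          apply Finset.eq_singleton_iff_unique_mem.mpr
          refine ⟨hv2, ?_⟩
          intro w hw
          by_contra hwv
          obtain ⟨y, hy, hvy⟩ := exists_adj_of_conn hc2 hv2 hw hwv
          exact h v hv1 y hy hvy
        have : C₁ = C₂ := by rw [← e1, ← e2, hD1, hD2]
        exact Or.inl (this ▸ Finset.Subset.refl C₁)
      · push_neg at hint
        refine Or.inr (Or.inr ?_)
        intro x hx y hy hxy
        by_cases hxB : x ∈ B <;> by_cases hyB : y ∈ B
        · obtain ⟨Bi, hBi, hxi⟩ := exists_comp hcomps hxB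
          obtain ⟨Bj, hBj, hyj⟩ := exists_comp hcomps hyB
          have hij : Bi = Bj := by
            by_contra hne
            exact comp_orth hcomps hBi hBj hne x hxi y hyj hxy
          subst hij
          have hBiC1 : Bi ⊆ C₁ := comp_sub hcomps hBi hxi hx h1c (h1k Bi hBi) h1n
          have hBiC2 : Bi ⊆ C₂ := comp_sub hcomps hBi hyj hy h2c (h2k Bi hBi) h2n
          obtain ⟨z₁, hz₁, b₁, hb₁, hzb₁⟩ := exists_exit hcomps hBi hBiC1 h1c h1n
          obtain ⟨z₂, hz₂, b₂, hb₂, hzb₂⟩ := exists_exit hcomps hBi hBiC2 h2c h2n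
          have hne12 : z₁ ≠ z₂ := fun he => hint z₁ hz₁ (he ▸ hz₂)
          exact h z₁ hz₁ z₂ hz₂ ((quot_adj' z₁ z₂).mpr ⟨hne12,
            (Finset.mem_sdiff.mp hz₁).2, (Finset.mem_sdiff.mp hz₂).2,
            Or.inr ⟨Bi, hBi, ⟨b₁, hb₁, hzb₁⟩, ⟨b₂, hb₂, hzb₂⟩⟩⟩)
        · obtain ⟨Bi, hBi, hxi⟩ := exists_comp hcomps hxB
          have hBiC1 : Bi ⊆ C₁ := comp_sub hcomps hBi hxi hx h1c (h1k Bi hBi) h1n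
          obtain ⟨z, hz, b, hb, hzb⟩ := exists_exit hcomps hBi hBiC1 h1c h1n
          have hyD2 : y ∈ C₂ \ B := Finset.mem_sdiff.mpr ⟨hy, hyB⟩
          have hne : z ≠ y := fun he => hint z hz (he ▸ hyD2)
          exact h z hz y hyD2 ((quot_adj' z y).mpr ⟨hne, (Finset.mem_sdiff.mp hz).2, hyB,
            Or.inr ⟨Bi, hBi, ⟨b, hb, hzb⟩, ⟨x, hxi, hxy.symm⟩⟩⟩)
        · obtain ⟨Bi, hBi, hyi⟩ := exists_comp hcomps hyB
          have hBiC2 : Bi ⊆ C₂ := comp_sub hcomps hBi hyi hy h2c (h2k Bi hBi) h2n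
          obtain ⟨z, hz, b, hb, hzb⟩ := exists_exit hcomps hBi hBiC2 h2c h2n
          have hxD1 : x ∈ C₁ \ B := Finset.mem_sdiff.mpr ⟨hx, hxB⟩
          have hne : x ≠ z := fun he => hint x hxD1 (he ▸ hz)
          exact h x hxD1 z hz ((quot_adj' x z).mpr ⟨hne, hxB, (Finset.mem_sdiff.mp hz).2,
            Or.inr ⟨Bi, hBi, ⟨y, hyi, hxy⟩, ⟨b, hb, hzb⟩⟩⟩)
        · exact h x (Finset.mem_sdiff.mpr ⟨hx, hxB⟩) y (Finset.mem_sdiff.mpr ⟨hy, hyB⟩)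
            ((quot_adj' x y).mpr ⟨hxy.ne, hxB, hyB, Or.inl hxy⟩)
end
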